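/- Let Ω ⊆ ℝ² be open and bounded, and let Ω' ⊆ Ω satisfy dist(Ω', ∂Ω) > 0 (for instance, Ω' compactly contained in Ω). Let (I_j)_{j∈ℕ} be a family of pairwise disjoint open segments, each contained in Ω and having both endpoints on ∂Ω, with ℋ¹(⋃_{j∈ℕ} I_j) < ∞. Then the set { j ∈ ℕ : I_j ∩ Ω' ≠ ∅ } is finite. -/

import Mathlib

/-- The plane `ℝ²` with the Euclidean norm. -/
abbrev Plane : Type := EuclideanSpace ℝ (Fin 2)

open MeasureTheory Set
open scoped ENNReal

/-- if `Ω ⊆ ℝ²` is open and bounded, `Ω' ⊆ Ω` is at positive distance from `∂Ω`,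
and `(I_j)_{j∈ℕ}` is a pairwise disjoint family of open segments contained in `Ω` with endpoints
on `∂Ω` whose union has finite `ℋ¹` measure, then only finitely many `I_j` meet `Ω'`. -/
theorem stmt19 (Ω : Set Plane) (hΩo : IsOpen Ω) (hΩb : Bornology.IsBounded Ω)
    (Ω' : Set Plane) (hsub : Ω' ⊆ Ω)
    (hdist : ∃ δ : ℝ, 0 < δ ∧ ∀ x ∈ Ω', ∀ y ∈ frontier Ω, δ ≤ dist x y)
    (y : ℕ → Plane × Plane)
    (hne : ∀ j, (y j).1 ≠ (y j).2)
    (hfr : ∀ j, (y j).1 ∈ frontier Ω ∧ (y j).2 ∈ frontier Ω)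
    (hsegsub : ∀ j, openSegment ℝ (y j).1 (y j).2 ⊆ Ω)
    (hdisj : Pairwise (Function.onFun Disjoint (fun j => openSegment ℝ (y j).1 (y j).2)))
    (hH1 : (MeasureTheory.Measure.hausdorffMeasure 1 : MeasureTheory.Measure Plane)
        (⋃ j, openSegment ℝ (y j).1 (y j).2) < ⊤) :
    {j : ℕ | (openSegment ℝ (y j).1 (y j).2 ∩ Ω').Nonempty}.Finite := by
  obtain ⟨δ, hδ, hδd⟩ := hdist
  set μ : Measure Plane := Measure.hausdorffMeasure 1 with hμ
  haveI : NoAtoms μ := by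
    rw [hμ]
    exact MeasureTheory.Measure.noAtoms_hausdorff (X := Plane) one_pos
  -- open segments equal segments minus endpoints, hence measurable
  have hOeq : ∀ j, openSegment ℝ (y j).1 (y j).2
      = segment ℝ (y j).1 (y j).2 \ {(y j).1, (y j).2} := by
    intro j
    apply Set.Subset.antisymm
    · intro x hx
      refine ⟨openSegment_subset_segment ℝ _ _ hx, ?_⟩
      rintro (rfl | rfl)
      · exact hne j (left_mem_openSegment_iff.mp hx)
      · exact hne j (right_mem_openSegment_iff.mp hx)
    · rintro x ⟨hx, hx2⟩
      rw [← insert_endpoints_openSegment] at hx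
      rcases hx with rfl | rfl | hx
      · exact absurd (Or.inl rfl) hx2
      · exact absurd (Or.inr rfl) hx2
      · exact hx
  have hmeas : ∀ j, MeasurableSet (openSegment ℝ (y j).1 (y j).2) := by
    intro j
    rw [hOeq j]
    have hseg : IsCompact (segment ℝ (y j).1 (y j).2) := by
      rw [segment_eq_image]
      exact isCompact_Icc.image (by fun_prop)
    exact (hseg.isClosed.measurableSet).diff
      (Set.Finite.measurableSet (Set.toFinite _))
  -- measure lower bound on segments meeting Ω'
  have hlb : ∀ j, (openSegment ℝ (y j).1 (y j).2 ∩ Ω').Nonempty →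
      ENNReal.ofReal (2 * δ) ≤ μ (openSegment ℝ (y j).1 (y j).2) := by
    intro j ⟨x, hxO, hxΩ'⟩
    have hμeq : μ (openSegment ℝ (y j).1 (y j).2) = edist (y j).1 (y j).2 := by
      rw [hOeq j, measure_diff_null, hμ, hausdorffMeasure_segment]
      haveI : NullSingletonClass μ := MeasureTheory.Measure.nullSingletonClass_hausdorff Plane one_pos
      exact measure_union_null (measure_singleton _) (measure_singleton _)
    rw [hμeq]
    have h1 : δ ≤ dist x (y j).1 := hδd x hxΩ' _ (hfr j).1
    have h2 : δ ≤ dist x (y j).2 := hδd x hxΩ' _ (hfr j).2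
    have h3 : dist (y j).1 x + dist x (y j).2 = dist (y j).1 (y j).2 :=
      dist_add_dist_of_mem_segment (openSegment_subset_segment ℝ _ _ hxO)
    have : 2 * δ ≤ dist (y j).1 (y j).2 := by
      rw [← h3, dist_comm (y j).1 x]; linarith
    rw [edist_dist]
    exact ENNReal.ofReal_le_ofReal this
  by_contra hinf
  set S := {j : ℕ | (openSegment ℝ (y j).1 (y j).2 ∩ Ω').Nonempty}
  have key : μ (⋃ j : S, openSegment ℝ (y (j : ℕ)).1 (y (j : ℕ)).2)
      = ∑' j : S, μ (openSegment ℝ (y (j : ℕ)).1 (y (j : ℕ)).2) := by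
    refine measure_iUnion ?_ (fun j => hmeas _)
    intro a b hab
    exact hdisj (fun h => hab (Subtype.ext h))
  haveI : Infinite S := (show S.Infinite from hinf).to_subtype
  have htop : (⊤ : ℝ≥0∞) ≤ μ (⋃ j : S, openSegment ℝ (y (j : ℕ)).1 (y (j : ℕ)).2) := by
    rw [key]
    calc (⊤ : ℝ≥0∞) = ∑' _ : S, ENNReal.ofReal (2 * δ) :=
          (ENNReal.tsum_const_eq_top_of_ne_zero (by positivity)).symm
      _ ≤ _ := ENNReal.tsum_le_tsum (fun j => hlb j j.2)
  have : μ (⋃ j : S, openSegment ℝ (y (j : ℕ)).1 (y (j : ℕ)).2) ≤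
      μ (⋃ j, openSegment ℝ (y j).1 (y j).2) :=
    measure_mono (Set.iUnion_subset fun j => Set.subset_iUnion (fun n => openSegment ℝ (y n).1 (y n).2) (j : ℕ))
  exact absurd (lt_of_le_of_lt (htop.trans this) hH1) (by simp)
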